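/- Let 0 < α ≤ β < 1. The function d ↦ w_d(α,β) is strictly concave on the interval [h⁻¹(β)−h⁻¹(α), h⁻¹(β)+h⁻¹(α)], its derivative vanishes at d* = h⁻¹(α) * h⁻¹(β) (which lies in this interval), and its maximum value over this interval equals α + β, attained at d = d*. -/

import Mathlib

open Finset Asymptotics Filter

/-- Binary entropy function (base-2 logarithms). -/
noncomputable def binEnt (p : ℝ) : ℝ :=
  -(p * Real.logb 2 p) - (1 - p) * Real.logb 2 (1 - p)

/-- Inverse of the binary entropy function restricted to `[0, 1/2]`. -/
noncomputable def binEntInv (x : ℝ) : ℝ :=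
  sSup {p : ℝ | p ∈ Set.Icc (0:ℝ) (1/2) ∧ binEnt p ≤ x}

/-- `p*q = p(1-q) + q(1-p)`. -/
def pstar (p q : ℝ) : ℝ := p * (1 - q) + q * (1 - p)

/-- Probability of the rectangle `A × B` for `ρ`-correlated uniform binary strings. -/
noncomputable def Pxy (n : ℕ) (ρ : ℝ) (A B : Finset (Fin n → Bool)) : ℝ :=
  ∑ a ∈ A, ∑ b ∈ B,
    (2:ℝ)⁻¹ ^ n * ((1 + ρ)/2) ^ n * ((1 - ρ)/(1 + ρ)) ^ (hammingDist a b)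

/-- Hamming sphere of radius `j` around the all-zeros string in `{0,1}^n`. -/
def hSphere (n j : ℕ) : Finset (Fin n → Bool) :=
  Finset.univ.filter (fun x => (Finset.univ.filter (fun i => x i = true)).card = j)

/-- The exponent function `w_d(α,β)`. -/
noncomputable def wd (α β d : ℝ) : ℝ :=
  α + binEntInv α * binEnt (1/2 + (binEntInv β - d)/(2 * binEntInv α))
    + (1 - binEntInv α) * binEnt (1/2 + (d - (1 - binEntInv β))/(2 * (1 - binEntInv α)))

/-- The noise operator `T_ρ`. -/
noncomputable def Tnoise (n : ℕ) (ρ : ℝ) (f : (Fin n → Bool) → ℝ) (y : Fin n → Bool) : ℝ :=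
  ∑ x : Fin n → Bool,
    f x * ((1 + ρ)/2) ^ (n - hammingDist x y) * ((1 - ρ)/2) ^ (hammingDist x y)

/-- The normalized `p`-norm on functions on the hypercube. -/
noncomputable def pNorm (n : ℕ) (p : ℝ) (f : (Fin n → Bool) → ℝ) : ℝ :=
  ((2:ℝ)⁻¹ ^ n * ∑ x : Fin n → Bool, |f x| ^ p) ^ (1/p)

/-- Indicator function of a set `A ⊆ {0,1}^n`. -/
def indA (n : ℕ) (A : Finset (Fin n → Bool)) : (Fin n → Bool) → ℝ :=
  fun x => if x ∈ A then 1 else 0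


section AuxEntropy

lemma binEnt_eq (p : ℝ) : binEnt p = Real.binEntropy p / Real.log 2 := by
  unfold binEnt Real.binEntropy Real.logb
  rw [Real.log_inv, Real.log_inv]
  ring

lemma log2pos : (0:ℝ) < Real.log 2 := Real.log_pos one_lt_two

lemma binEnt_zero : binEnt 0 = 0 := by simp [binEnt_eq]

lemma binEnt_half : binEnt (1/2) = 1 := by
  rw [binEnt_eq, show (1:ℝ)/2 = 2⁻¹ by norm_num, Real.binEntropy_two_inv,
    div_self log2pos.ne']

lemma binEnt_strictMonoOn : StrictMonoOn binEnt (Set.Icc 0 (1/2)) := by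
  intro x hx y hy hxy
  have h := Real.binEntropy_strictMonoOn (by norm_num at hx ⊢; exact hx)
    (by norm_num at hy ⊢; exact hy) hxy
  rw [binEnt_eq, binEnt_eq]
  exact (div_lt_div_iff_of_pos_right log2pos).2 h

lemma strictConcave_binEnt : StrictConcaveOn ℝ (Set.Icc 0 1) binEnt := by
  refine ⟨convex_Icc 0 1, fun x hx y hy hxy a b ha hb hab => ?_⟩
  have h := Real.strictConcave_binEntropy.2 hx hy hxy ha hb hab
  simp only [smul_eq_mul, binEnt_eq] at h ⊢
  rw [show a * (Real.binEntropy x / Real.log 2) + b * (Real.binEntropy y / Real.log 2)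
      = (a * Real.binEntropy x + b * Real.binEntropy y) / Real.log 2 by ring]
  exact (div_lt_div_iff_of_pos_right log2pos).2 h

lemma binEnt_continuous : Continuous binEnt := by
  rw [funext binEnt_eq]
  exact Real.binEntropy_continuous.div_const _

lemma binEntInv_spec {x : ℝ} (hx0 : 0 ≤ x) (hx1 : x ≤ 1) :
    binEntInv x ∈ Set.Icc (0:ℝ) (1/2) ∧ binEnt (binEntInv x) = x := by
  obtain ⟨p, hp, hpx⟩ : ∃ p ∈ Set.Icc (0:ℝ) (1/2), binEnt p = x := by
    have hc : ContinuousOn binEnt (Set.Icc 0 (1/2)) := binEnt_continuous.continuousOn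
    have h := intermediate_value_Icc (by norm_num : (0:ℝ) ≤ 1/2) hc
    have hx : x ∈ Set.Icc (binEnt 0) (binEnt (1/2)) := by
      rw [binEnt_zero, binEnt_half]; exact ⟨hx0, hx1⟩
    exact h hx
  have hgreat : IsGreatest {q : ℝ | q ∈ Set.Icc (0:ℝ) (1/2) ∧ binEnt q ≤ x} p := by
    constructor
    · exact ⟨hp, hpx.le⟩
    · rintro q ⟨hq, hqx⟩
      by_contra hcon
      push_neg at hcon
      have := binEnt_strictMonoOn hp hq hcon
      rw [hpx] at this
      linarith
  have heq : binEntInv x = p := hgreat.csSup_eq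
  rw [heq]
  exact ⟨hp, hpx⟩

lemma hasDerivAt_binEnt {p : ℝ} (h0 : p ≠ 0) (h1 : p ≠ 1) :
    HasDerivAt binEnt ((Real.log (1 - p) - Real.log p) / Real.log 2) p := by
  have h := (Real.hasDerivAt_binEntropy h0 h1).div_const (Real.log 2)
  rw [funext binEnt_eq]
  exact h

lemma aux_concave {f : ℝ → ℝ} {t : Set ℝ} (hf : StrictConcaveOn ℝ t f)
    {s : Set ℝ} (hs : Convex ℝ s) {c : ℝ} (hc : 0 < c) {ℓ : ℝ → ℝ} {e m : ℝ} (hm : m ≠ 0)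
    (hℓ : ∀ d, ℓ d = e + m * d) (hmap : ∀ d ∈ s, ℓ d ∈ t) :
    StrictConcaveOn ℝ s (fun d => c * f (ℓ d)) := by
  refine ⟨hs, fun x hx y hy hxy a b ha hb hab => ?_⟩
  have h1 : ℓ (a • x + b • y) = a • ℓ x + b • ℓ y := by
    simp only [smul_eq_mul, hℓ]
    linear_combination (-e) * hab
  have hne : ℓ x ≠ ℓ y := by
    rw [hℓ, hℓ]
    intro h
    exact hxy (mul_left_cancel₀ hm (by linarith))
  have h2 := hf.2 (hmap x hx) (hmap y hy) hne ha hb hab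
  simp only [smul_eq_mul] at h1 h2 ⊢
  rw [h1]
  nlinarith [mul_lt_mul_of_pos_left h2 hc]

end AuxEntropy

/-- `d ↦ w_d(α,β)` is strictly concave, has vanishing derivative at
`d* = h⁻¹(α) * h⁻¹(β)`, and attains its maximum value `α + β` there. -/
theorem stmt_6 (α β : ℝ) (hα : 0 < α) (hαβ : α ≤ β) (hβ : β < 1) :
    StrictConcaveOn ℝ (Set.Icc (binEntInv β - binEntInv α) (binEntInv β + binEntInv α))
        (fun d : ℝ => wd α β d) ∧
    pstar (binEntInv α) (binEntInv β)
        ∈ Set.Icc (binEntInv β - binEntInv α) (binEntInv β + binEntInv α) ∧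
    HasDerivAt (fun d : ℝ => wd α β d) 0 (pstar (binEntInv α) (binEntInv β)) ∧
    wd α β (pstar (binEntInv α) (binEntInv β)) = α + β ∧
    ∀ d ∈ Set.Icc (binEntInv β - binEntInv α) (binEntInv β + binEntInv α),
      wd α β d ≤ α + β := by
  have hA' := binEntInv_spec hα.le (hαβ.trans hβ.le)
  have hB' := binEntInv_spec (hα.le.trans hαβ) hβ.le
  set A := binEntInv α with hA
  set B := binEntInv β with hB
  obtain ⟨⟨hA0', hA2⟩, hAent⟩ := hA'
  obtain ⟨⟨hB0', hB2'⟩, hBent⟩ := hB'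
  have hA0 : 0 < A := by
    rcases hA0'.lt_or_eq with h | h
    · exact h
    · rw [← h, binEnt_zero] at hAent; linarith
  have hB2 : B < 1/2 := by
    rcases hB2'.lt_or_eq with h | h
    · exact h
    · rw [h, binEnt_half] at hBent; linarith
  have hAB : A ≤ B := by
    by_contra hcon
    push_neg at hcon
    have := binEnt_strictMonoOn ⟨hB0', hB2'⟩ ⟨hA0', hA2⟩ hcon
    rw [hAent, hBent] at this
    linarith
  have hB0 : 0 < B := hA0.trans_le hAB
  have hA2' : A < 1/2 := lt_of_le_of_lt hAB hB2
  have hA1 : A < 1 := by linarith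
  have h1A : 0 < 1 - A := by linarith
  -- the two affine arguments stay in [0,1]
  have hmap1 : ∀ d ∈ Set.Icc (B - A) (B + A),
      1/2 + (B - d)/(2*A) ∈ Set.Icc (0:ℝ) 1 := by
    rintro d ⟨hd1, hd2⟩
    constructor
    · have : -(1/2 : ℝ) ≤ (B - d)/(2*A) := by
        rw [le_div_iff₀ (by positivity)]; linarith
      linarith
    · have : (B - d)/(2*A) ≤ 1/2 := by
        rw [div_le_iff₀ (by positivity)]; linarith
      linarith
  have hmap2 : ∀ d ∈ Set.Icc (B - A) (B + A),
      1/2 + (d - (1 - B))/(2*(1 - A)) ∈ Set.Icc (0:ℝ) 1 := by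
    rintro d ⟨hd1, hd2⟩
    constructor
    · have : -(1/2 : ℝ) ≤ (d - (1 - B))/(2*(1 - A)) := by
        rw [le_div_iff₀ (by positivity)]; linarith
      linarith
    · have : (d - (1 - B))/(2*(1 - A)) ≤ 1/2 := by
        rw [div_le_iff₀ (by positivity)]; linarith
      linarith
  -- strict concavity
  have hconc : StrictConcaveOn ℝ (Set.Icc (B - A) (B + A)) (fun d : ℝ => wd α β d) := by
    have h1 : StrictConcaveOn ℝ (Set.Icc (B - A) (B + A))
        (fun d => A * binEnt (1/2 + (B - d)/(2*A))) :=
      aux_concave strictConcave_binEnt (convex_Icc _ _) hA0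
        (e := 1/2 + B/(2*A)) (m := -(1/(2*A))) (by intro h; rw [neg_eq_zero, div_eq_zero_iff] at h; rcases h with h | h <;> [exact one_ne_zero h; linarith]) (fun d => by field_simp; ring)
        hmap1
    have h2 : StrictConcaveOn ℝ (Set.Icc (B - A) (B + A))
        (fun d => (1 - A) * binEnt (1/2 + (d - (1 - B))/(2*(1 - A)))) :=
      aux_concave strictConcave_binEnt (convex_Icc _ _) h1A
        (e := 1/2 - (1 - B)/(2*(1 - A))) (m := 1/(2*(1 - A)))
        (by positivity) (fun d => by field_simp; ring) hmap2
    have heq : (fun d : ℝ => wd α β d)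
        = ((fun d => A * binEnt (1/2 + (B - d)/(2*A)))
            + fun d => (1 - A) * binEnt (1/2 + (d - (1 - B))/(2*(1 - A)))) + fun _ => α := by
      funext d
      simp only [wd, ← hA, ← hB, Pi.add_apply]
      ring
    rw [heq]
    exact (h1.add h2).add_concaveOn (concaveOn_const _ (convex_Icc _ _))
  -- d* in the interval
  have hmem : pstar A B ∈ Set.Icc (B - A) (B + A) := by
    unfold pstar
    constructor <;> nlinarith
  -- the two arguments at d* both equal B
  have hv1 : 1/2 + (B - pstar A B)/(2*A) = B := by
    unfold pstar
    field_simp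
    ring
  have hv2 : 1/2 + (pstar A B - (1 - B))/(2*(1 - A)) = B := by
    unfold pstar
    field_simp
    ring
  have hB0' : B ≠ 0 := hB0.ne'
  have hB1' : B ≠ 1 := by intro h; rw [h] at hB2; norm_num at hB2
  -- derivative
  have hderiv : HasDerivAt (fun d : ℝ => wd α β d) 0 (pstar A B) := by
    have hl1 : HasDerivAt (fun d : ℝ => 1/2 + (B - d)/(2*A)) (-1/(2*A)) (pstar A B) := by
      have := (((hasDerivAt_id (pstar A B)).const_sub B).div_const (2*A)).const_add (1/2 : ℝ)
      simpa using this
    have hl2 : HasDerivAt (fun d : ℝ => 1/2 + (d - (1 - B))/(2*(1 - A)))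
        (1/(2*(1 - A))) (pstar A B) := by
      have := (((hasDerivAt_id (pstar A B)).sub_const (1 - B)).div_const (2*(1 - A))).const_add
        (1/2 : ℝ)
      simpa using this
    have hbe := hasDerivAt_binEnt hB0' hB1'
    have hc1 : HasDerivAt (fun d : ℝ => binEnt (1/2 + (B - d)/(2*A)))
        (((Real.log (1 - B) - Real.log B) / Real.log 2) * (-1/(2*A))) (pstar A B) := by
      have hb : HasDerivAt binEnt ((Real.log (1 - B) - Real.log B) / Real.log 2)
          (1/2 + (B - pstar A B)/(2*A)) := by rw [hv1]; exact hbe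
      simpa [Function.comp_def] using HasDerivAt.comp (pstar A B) hb hl1
    have hc2 : HasDerivAt (fun d : ℝ => binEnt (1/2 + (d - (1 - B))/(2*(1 - A))))
        (((Real.log (1 - B) - Real.log B) / Real.log 2) * (1/(2*(1 - A)))) (pstar A B) := by
      have hb : HasDerivAt binEnt ((Real.log (1 - B) - Real.log B) / Real.log 2)
          (1/2 + (pstar A B - (1 - B))/(2*(1 - A))) := by rw [hv2]; exact hbe
      simpa [Function.comp_def] using HasDerivAt.comp (pstar A B) hb hl2
    have H := ((hc1.const_mul A).const_add α).add (hc2.const_mul (1 - A))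
    have hfun : (fun d : ℝ => wd α β d)
        = fun d => α + A * binEnt (1/2 + (B - d)/(2*A))
            + (1 - A) * binEnt (1/2 + (d - (1 - B))/(2*(1 - A))) := by
      funext d
      simp only [wd, ← hA, ← hB]
    rw [hfun]
    refine H.congr_deriv ?_
    field_simp
    ring
  -- value at d*
  have hval : wd α β (pstar A B) = α + β := by
    simp only [wd, ← hA, ← hB]
    rw [hv1, hv2, hBent]
    ring
  refine ⟨hconc, hmem, hderiv, hval, ?_⟩
  -- maximum
  intro d hd
  have m1 := hmap1 d hd
  have m2 := hmap2 d hd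
  have hc := strictConcave_binEnt.concaveOn.2 m1 m2 hA0.le h1A.le (by ring)
  simp only [smul_eq_mul] at hc
  have harg : A * (1/2 + (B - d)/(2*A)) + (1 - A) * (1/2 + (d - (1 - B))/(2*(1 - A))) = B := by
    field_simp
    ring
  rw [harg, hBent] at hc
  simp only [wd, ← hA, ← hB]
  linarith
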